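/- Let t be a positive integer, let A be an m×n (0,1)-matrix, and let p be an integer with 0 ≤ p ≤ tm. Let l be the smallest nonnegative integer with tl ≥ n − p, and set q = tl − (n − p). Let A* be the (m+l) × t(m+l) (0,1)-matrix in block form A* = [[O_{l,tm−p}, J_{l,n}, J_{l,q}],[J_{m,tm−p}, A, O_{m,q}]], where J and O denote all-1s and all-0s matrices of the indicated sizes. Then ρ_t(A) ≥ p if and only if ρ_t(A*) = t(m+l). -/

import Mathlib

open scoped BigOperators

/-- The `t`-term rank of a matrix `A` with entries in `ℕ`: the largest number of 1s of `A`
(equivalently, the largest sum `σ(B)` over `(0,1)`-matrices `B ≤ A`) with at most one 1 in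
each column and at most `t` 1s in each row. -/
noncomputable def tTermRank {α β : Type*} [Fintype α] [Fintype β] (t : ℕ)
    (A : Matrix α β ℕ) : ℕ :=
  sSup {k : ℕ | ∃ B : Matrix α β ℕ,
    (∀ i j, B i j ≤ A i j) ∧ (∀ i, ∑ j, B i j ≤ t) ∧ (∀ j, ∑ i, B i j ≤ 1) ∧
    k = ∑ i, ∑ j, B i j}

lemma exists_le_sum_eq' {γ : Type*} [Fintype γ] (f : γ → ℕ) (p : ℕ) (h : p ≤ ∑ x, f x) :
    ∃ g : γ → ℕ, (∀ x, g x ≤ f x) ∧ ∑ x, g x = p := by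
  induction p with
  | zero => exact ⟨0, fun x => Nat.zero_le _, by simp⟩
  | succ p ih =>
    obtain ⟨g, hg, hsum⟩ := ih (by omega)
    have hx : ∃ x, g x < f x := by
      by_contra hc
      push_neg at hc
      have := Finset.sum_le_sum (fun x (_ : x ∈ Finset.univ) => hc x)
      omega
    obtain ⟨x0, hx0⟩ := hx
    classical
    refine ⟨Function.update g x0 (g x0 + 1), ?_, ?_⟩
    · intro x
      rcases eq_or_ne x x0 with rfl | hne
      · simpa using hx0
      · simp [Function.update_of_ne hne, hg x]
    · rw [Finset.sum_update_of_mem (Finset.mem_univ x0)]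
      have h2 : ∑ x, g x = ∑ x ∈ Finset.univ \ {x0}, g x + g x0 := by
        rw [Finset.sum_eq_sum_sdiff_singleton_add (Finset.mem_univ x0) g]
      omega

lemma exists_distribution {α β : Type*} [Fintype α] [Fintype β] [DecidableEq α]
    (w : α → ℕ) (hw : ∑ a, w a = Fintype.card β) :
    ∃ M : α → β → ℕ, (∀ a, ∑ x, M a x = w a) ∧ (∀ x, ∑ a, M a x = 1) ∧ (∀ a x, M a x ≤ 1) := by
  have hcard : Fintype.card β = Fintype.card (Σ a, Fin (w a)) := by
    simp [Fintype.card_sigma, hw]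
  let e := Fintype.equivOfCardEq hcard
  refine ⟨fun a x => if (e x).1 = a then 1 else 0, ?_, ?_, ?_⟩
  · intro a
    have h1 : ∑ x : β, (if (e x).1 = a then 1 else 0)
        = ∑ s : (Σ a, Fin (w a)), (if s.1 = a then (1:ℕ) else 0) :=
      Equiv.sum_comp e (fun s => if s.1 = a then 1 else 0)
    rw [h1, ← Finset.univ_sigma_univ, Finset.sum_sigma]
    simp [apply_ite Finset.card, Finset.sum_ite_eq' Finset.univ a]
  · intro x
    simp
  · intro a x
    simp only []
    split <;> simp

lemma sum_dite_subtype' {γ : Type*} [Fintype γ] (P : γ → Prop) [DecidablePred P]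
    (f : {x // P x} → ℕ) :
    ∑ x : γ, (if h : P x then f ⟨x, h⟩ else 0) = ∑ s : {x // P x}, f s := by
  classical
  rw [← Finset.sum_filter_add_sum_filter_not Finset.univ P]
  have h2 : ∑ x ∈ Finset.univ.filter (fun x => ¬ P x), (if h : P x then f ⟨x, h⟩ else 0) = 0 := by
    apply Finset.sum_eq_zero
    intro x hx
    rw [Finset.mem_filter] at hx
    exact dif_neg hx.2
  rw [h2, add_zero]
  rw [Finset.sum_subtype (p := P) (Finset.univ.filter P) (by simp)
    (fun x => if h : P x then f ⟨x, h⟩ else 0)]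
  apply Finset.sum_congr rfl
  intro s _
  rw [dif_pos s.2]


lemma tTermRank_bddAbove {α β : Type*} [Fintype α] [Fintype β] (t : ℕ) (A : Matrix α β ℕ) :
    ∀ k ∈ {k : ℕ | ∃ B : Matrix α β ℕ,
      (∀ i j, B i j ≤ A i j) ∧ (∀ i, ∑ j, B i j ≤ t) ∧ (∀ j, ∑ i, B i j ≤ 1) ∧
      k = ∑ i, ∑ j, B i j}, k ≤ Fintype.card β := by
  rintro k ⟨B, _, _, hBc, rfl⟩
  rw [show ∑ i, ∑ j, B i j = ∑ j, ∑ i, B i j from Finset.sum_comm]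
  calc ∑ j, ∑ i, B i j ≤ ∑ _j : β, 1 := Finset.sum_le_sum (fun j _ => hBc j)
    _ = Fintype.card β := by simp

lemma tTermRank_mem {α β : Type*} [Fintype α] [Fintype β] (t : ℕ) (A : Matrix α β ℕ) :
    ∃ B : Matrix α β ℕ, (∀ i j, B i j ≤ A i j) ∧ (∀ i, ∑ j, B i j ≤ t) ∧
      (∀ j, ∑ i, B i j ≤ 1) ∧ tTermRank t A = ∑ i, ∑ j, B i j := by
  have hne : {k : ℕ | ∃ B : Matrix α β ℕ,
      (∀ i j, B i j ≤ A i j) ∧ (∀ i, ∑ j, B i j ≤ t) ∧ (∀ j, ∑ i, B i j ≤ 1) ∧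
      k = ∑ i, ∑ j, B i j}.Nonempty := ⟨0, 0, by simp⟩
  have hbdd : BddAbove {k : ℕ | ∃ B : Matrix α β ℕ,
      (∀ i j, B i j ≤ A i j) ∧ (∀ i, ∑ j, B i j ≤ t) ∧ (∀ j, ∑ i, B i j ≤ 1) ∧
      k = ∑ i, ∑ j, B i j} := ⟨Fintype.card β, fun k hk => tTermRank_bddAbove t A k hk⟩
  obtain ⟨B, h1, h2, h3, h4⟩ := Nat.sSup_mem hne hbdd
  exact ⟨B, h1, h2, h3, h4⟩

lemma le_tTermRank {α β : Type*} [Fintype α] [Fintype β] (t : ℕ) (A : Matrix α β ℕ)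
    (B : Matrix α β ℕ) (h1 : ∀ i j, B i j ≤ A i j) (h2 : ∀ i, ∑ j, B i j ≤ t)
    (h3 : ∀ j, ∑ i, B i j ≤ 1) : ∑ i, ∑ j, B i j ≤ tTermRank t A :=
  le_csSup ⟨Fintype.card β, fun k hk => tTermRank_bddAbove t A k hk⟩
    ⟨B, h1, h2, h3, rfl⟩

/-- The `(m+l) × t(m+l)` auxiliary matrix
`A* = [[O_{l,tm−p}, J_{l,n}, J_{l,q}], [J_{m,tm−p}, A, O_{m,q}]]`,
with rows indexed by `Fin l ⊕ Fin m` and columns by `Fin (tm−p) ⊕ (Fin n ⊕ Fin q)`. -/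
def auxMatrix {m n : ℕ} (t p l q : ℕ) (A : Matrix (Fin m) (Fin n) ℕ) :
    Matrix (Fin l ⊕ Fin m) (Fin (t * m - p) ⊕ (Fin n ⊕ Fin q)) ℕ :=
  fun i j =>
    match i, j with
    | Sum.inl _, Sum.inl _ => 0
    | Sum.inl _, Sum.inr (Sum.inl _) => 1
    | Sum.inl _, Sum.inr (Sum.inr _) => 1
    | Sum.inr i, Sum.inl _ => 1
    | Sum.inr i, Sum.inr (Sum.inl j) => A i j
    | Sum.inr _, Sum.inr (Sum.inr _) => 0

/-- With `0 ≤ p ≤ tm`, `l` the smallest nonnegative integer with `tl ≥ n − p`, and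
`q = tl − (n − p)`, one has `ρ_t(A) ≥ p` iff `ρ_t(A*) = t(m+l)`. -/
theorem t_term_rank_ge_iff_aux_full (m n t : ℕ) (ht : 0 < t)
    (A : Matrix (Fin m) (Fin n) ℕ) (hA : ∀ i j, A i j ≤ 1)
    (p : ℕ) (hp : p ≤ t * m)
    (l : ℕ) (hl : n ≤ t * l + p) (hlmin : ∀ l' : ℕ, n ≤ t * l' + p → l ≤ l')
    (q : ℕ) (hq : q = t * l + p - n) :
    p ≤ tTermRank t A ↔ tTermRank t (auxMatrix t p l q A) = t * (m + l) := by
  classical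
  have hqn : q + n = t * l + p := by omega
  constructor
  · intro hge
    obtain ⟨B0, hB0A, hB0r, hB0c, hB0s⟩ := tTermRank_mem t A
    have hp0 : p ≤ ∑ x : Fin m × Fin n, B0 x.1 x.2 := by
      have h' : ∑ x : Fin m × Fin n, B0 x.1 x.2 = ∑ i, ∑ j, B0 i j :=
        Fintype.sum_prod_type _
      omega
    obtain ⟨g, hgle, hgsum⟩ := exists_le_sum_eq' (fun x : Fin m × Fin n => B0 x.1 x.2) p hp0
    set B : Matrix (Fin m) (Fin n) ℕ := fun i j => g (i, j) with hBdef
    have hBA : ∀ i j, B i j ≤ A i j := fun i j => le_trans (hgle (i, j)) (hB0A i j)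
    have hBr : ∀ i, ∑ j, B i j ≤ t := fun i =>
      le_trans (Finset.sum_le_sum fun j _ => hgle (i, j)) (hB0r i)
    have hBc : ∀ j, ∑ i, B i j ≤ 1 := fun j =>
      le_trans (Finset.sum_le_sum fun i _ => hgle (i, j)) (hB0c j)
    have hBs : ∑ i, ∑ j, B i j = p := by rw [← Fintype.sum_prod_type]; exact hgsum
    have hcolsum : ∑ j, ∑ i, B i j = p := by rw [Finset.sum_comm]; exact hBs
    have hpn : p ≤ n := by
      calc p = ∑ j, ∑ i, B i j := hcolsum.symm
      _ ≤ ∑ _j : Fin n, 1 := Finset.sum_le_sum (fun j _ => hBc j)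
      _ = n := by simp
    -- distribution for the bottom-left block
    have hw1 : ∑ i, (t - ∑ j, B i j) = Fintype.card (Fin (t * m - p)) := by
      have h1 : ∑ i, ((t - ∑ j, B i j) + ∑ j, B i j) = ∑ _i : Fin m, t :=
        Finset.sum_congr rfl (fun i _ => by have := hBr i; omega)
      rw [Finset.sum_add_distrib, hBs] at h1
      simp only [Finset.sum_const, Finset.card_univ, Fintype.card_fin, smul_eq_mul] at h1 ⊢
      have : m * t = t * m := Nat.mul_comm m t
      omega
    obtain ⟨M1, hM1r, hM1c, hM1le⟩ :=
      exists_distribution (fun i : Fin m => t - ∑ j, B i j) hw1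
    -- free columns
    set P : Fin n → Prop := fun j => ∑ i, B i j = 0 with hPdef
    have hfilter1 : (Finset.univ.filter (fun j => ¬ P j)).card = p := by
      rw [Finset.card_filter, ← hcolsum]
      apply Finset.sum_congr rfl
      intro j _
      have h1 := hBc j
      by_cases h : P j
      · rw [if_neg (not_not_intro h)]
        exact (h : ∑ i, B i j = 0).symm
      · rw [if_pos h]
        have h0 : ∑ i, B i j ≠ 0 := h
        omega
    have hfilter2 : (Finset.univ.filter (fun j : Fin n => P j)).card
        + (Finset.univ.filter (fun j : Fin n => ¬ P j)).card = n := by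
      rw [Finset.card_filter_add_card_filter_not]
      simp
    have hcardP : Fintype.card {j : Fin n // P j} = n - p := by
      rw [Fintype.card_subtype]
      omega
    have hw2 : ∑ _i : Fin l, t = Fintype.card ({j : Fin n // P j} ⊕ Fin q) := by
      simp only [Finset.sum_const, Finset.card_univ, Fintype.card_fin, smul_eq_mul,
        Fintype.card_sum, hcardP]
      have : l * t = t * l := Nat.mul_comm l t
      omega
    obtain ⟨M2, hM2r, hM2c, hM2le⟩ := exists_distribution (fun _ : Fin l => t) hw2
    set N : Fin l → (Fin n ⊕ Fin q) → ℕ := fun i c =>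
      match c with
      | Sum.inl j => if h : P j then M2 i (Sum.inl ⟨j, h⟩) else 0
      | Sum.inr x => M2 i (Sum.inr x) with hNdef
    have hNle : ∀ i c, N i c ≤ 1 := by
      intro i c
      match c with
      | Sum.inl j =>
        simp only [hNdef]
        split
        · exact hM2le i _
        · exact Nat.zero_le 1
      | Sum.inr x => exact hM2le i _
    have hNr : ∀ i, ∑ c, N i c = t := by
      intro i
      rw [Fintype.sum_sum_type]
      have h1 : ∑ j : Fin n, N i (Sum.inl j) = ∑ s : {j : Fin n // P j}, M2 i (Sum.inl s) :=
        sum_dite_subtype' P (fun s => M2 i (Sum.inl s))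
      have h2 : ∑ s : {j : Fin n // P j}, M2 i (Sum.inl s)
          + ∑ x : Fin q, M2 i (Sum.inr x) = t := by
        rw [← Fintype.sum_sum_type]; exact hM2r i
      rw [h1]
      exact h2
    set Bs : Matrix (Fin l ⊕ Fin m) (Fin (t * m - p) ⊕ (Fin n ⊕ Fin q)) ℕ := fun r c =>
      match r, c with
      | Sum.inl i, Sum.inl _ => 0
      | Sum.inl i, Sum.inr c => N i c
      | Sum.inr i, Sum.inl c => M1 i c
      | Sum.inr i, Sum.inr (Sum.inl j) => B i j
      | Sum.inr i, Sum.inr (Sum.inr _) => 0 with hBsdef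
    have hBsA : ∀ r c, Bs r c ≤ auxMatrix t p l q A r c := by
      rintro (i | i) (c | (j | x)) <;> simp only [hBsdef, auxMatrix]
      · exact le_refl 0
      · exact hNle i (Sum.inl j)
      · exact hNle i (Sum.inr x)
      · exact hM1le i c
      · exact hBA i j
      · exact le_refl 0
    have hBsrl : ∀ i : Fin l, ∑ c, Bs (Sum.inl i) c = t := by
      intro i
      rw [Fintype.sum_sum_type]
      simp only [hBsdef]
      rw [hNr i]
      simp
    have hBsrr : ∀ i : Fin m, ∑ c, Bs (Sum.inr i) c = t := by
      intro i
      rw [Fintype.sum_sum_type, Fintype.sum_sum_type]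
      simp only [hBsdef]
      rw [hM1r i]
      have := hBr i
      simp only [Finset.sum_const, Finset.card_univ, Fintype.card_fin, smul_eq_mul,
        Nat.mul_zero, Nat.add_zero]
      omega
    have hBsr : ∀ r, ∑ c, Bs r c ≤ t := by
      rintro (i | i)
      · exact le_of_eq (hBsrl i)
      · exact le_of_eq (hBsrr i)
    have hBsc : ∀ c, ∑ r, Bs r c ≤ 1 := by
      rintro (c | (j | x)) <;> rw [Fintype.sum_sum_type] <;> simp only [hBsdef]
      · rw [hM1c c]; simp
      · by_cases h : P j
        · have h1 : ∑ i : Fin l, N i (Sum.inl j)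
              = ∑ i : Fin l, M2 i (Sum.inl ⟨j, h⟩) :=
            Finset.sum_congr rfl (fun i _ => by simp only [hNdef]; rw [dif_pos h])
          have h2 : (∑ i : Fin m, B i j) = 0 := h
          rw [h1, hM2c (Sum.inl ⟨j, h⟩), h2]
        · have h1 : ∑ i : Fin l, N i (Sum.inl j) = 0 :=
            Finset.sum_eq_zero (fun i _ => by simp only [hNdef]; rw [dif_neg h])
          rw [h1]
          have := hBc j
          omega
      · rw [hM2c (Sum.inr x)]; simp
    have htotal : ∑ r, ∑ c, Bs r c = t * (m + l) := by
      rw [Fintype.sum_sum_type,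
        Finset.sum_congr rfl (fun i (_ : i ∈ Finset.univ) => hBsrl i),
        Finset.sum_congr rfl (fun i (_ : i ∈ Finset.univ) => hBsrr i)]
      simp only [Finset.sum_const, Finset.card_univ, Fintype.card_fin, smul_eq_mul]
      ring
    have hub : ∀ k ∈ {k : ℕ | ∃ C : Matrix (Fin l ⊕ Fin m)
        (Fin (t * m - p) ⊕ (Fin n ⊕ Fin q)) ℕ,
        (∀ i j, C i j ≤ auxMatrix t p l q A i j) ∧ (∀ i, ∑ j, C i j ≤ t) ∧
        (∀ j, ∑ i, C i j ≤ 1) ∧ k = ∑ i, ∑ j, C i j}, k ≤ t * (m + l) := by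
      intro k hk
      have h1 := tTermRank_bddAbove t (auxMatrix t p l q A) k hk
      simp only [Fintype.card_sum, Fintype.card_fin] at h1
      have h2 : t * (m + l) = t * m + t * l := Nat.mul_add t m l
      omega
    apply le_antisymm
    · exact csSup_le ⟨0, 0, by simp⟩ hub
    · exact le_csSup ⟨t * (m + l), hub⟩ ⟨Bs, hBsA, hBsr, hBsc, htotal.symm⟩
  · intro heq
    obtain ⟨Bs, hBsA, hBsr, hBsc, hBss⟩ := tTermRank_mem t (auxMatrix t p l q A)
    have htot : ∑ r, ∑ c, Bs r c = t * (m + l) := by rw [← hBss, heq]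
    have hmul : t * (m + l) = t * m + t * l := Nat.mul_add t m l
    -- every column sum is 1
    have hcs : ∀ c, ∑ r, Bs r c = 1 := by
      intro c
      by_contra hc
      have hlt : ∑ r, Bs r c < 1 := lt_of_le_of_ne (hBsc c) hc
      have h1 : ∑ c', ∑ r, Bs r c' < ∑ _c' : Fin (t * m - p) ⊕ (Fin n ⊕ Fin q), 1 :=
        Finset.sum_lt_sum (fun j _ => hBsc j) ⟨c, Finset.mem_univ c, hlt⟩
      rw [Finset.sum_comm, htot] at h1
      simp only [Finset.sum_const, Finset.card_univ, Fintype.card_sum, Fintype.card_fin,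
        smul_eq_mul, Nat.mul_one] at h1
      omega
    -- every row sum is t
    have hrs : ∀ r, ∑ c, Bs r c = t := by
      intro r
      by_contra hr
      have hlt : ∑ c, Bs r c < t := lt_of_le_of_ne (hBsr r) hr
      have h1 : ∑ r', ∑ c, Bs r' c < ∑ _r' : Fin l ⊕ Fin m, t :=
        Finset.sum_lt_sum (fun r' _ => hBsr r') ⟨r, Finset.mem_univ r, hlt⟩
      rw [htot] at h1
      simp only [Finset.sum_const, Finset.card_univ, Fintype.card_sum, Fintype.card_fin,
        smul_eq_mul] at h1
      have h2 : (l + m) * t = t * l + t * m := by ring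
      omega
    have hz1 : ∀ (i : Fin l) (c : Fin (t * m - p)), Bs (Sum.inl i) (Sum.inl c) = 0 := by
      intro i c
      have := hBsA (Sum.inl i) (Sum.inl c)
      simpa [auxMatrix] using this
    have hz2 : ∀ (i : Fin m) (x : Fin q), Bs (Sum.inr i) (Sum.inr (Sum.inr x)) = 0 := by
      intro i x
      have := hBsA (Sum.inr i) (Sum.inr (Sum.inr x))
      simpa [auxMatrix] using this
    set B : Matrix (Fin m) (Fin n) ℕ := fun i j => Bs (Sum.inr i) (Sum.inr (Sum.inl j))
      with hBdef
    have hBA : ∀ i j, B i j ≤ A i j := by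
      intro i j
      have := hBsA (Sum.inr i) (Sum.inr (Sum.inl j))
      simpa [auxMatrix] using this
    have hBr : ∀ i, ∑ j, B i j ≤ t := by
      intro i
      have h := hrs (Sum.inr i)
      rw [Fintype.sum_sum_type, Fintype.sum_sum_type] at h
      have hBeq : ∑ j, B i j = ∑ j : Fin n, Bs (Sum.inr i) (Sum.inr (Sum.inl j)) := rfl
      omega
    have hBc : ∀ j, ∑ i, B i j ≤ 1 := by
      intro j
      have h := hcs (Sum.inr (Sum.inl j))
      rw [Fintype.sum_sum_type] at h
      have hBeq : ∑ i, B i j = ∑ i : Fin m, Bs (Sum.inr i) (Sum.inr (Sum.inl j)) := rfl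
      omega
    -- T2 = q
    have hT2 : ∑ i : Fin l, ∑ x : Fin q, Bs (Sum.inl i) (Sum.inr (Sum.inr x)) = q := by
      rw [Finset.sum_comm]
      have h1 : ∀ x : Fin q, ∑ i : Fin l, Bs (Sum.inl i) (Sum.inr (Sum.inr x)) = 1 := by
        intro x
        have h := hcs (Sum.inr (Sum.inr x))
        rw [Fintype.sum_sum_type] at h
        have h0 : ∑ i : Fin m, Bs (Sum.inr i) (Sum.inr (Sum.inr x)) = 0 :=
          Finset.sum_eq_zero fun i _ => hz2 i x
        omega
      rw [Finset.sum_congr rfl (fun x (_ : x ∈ Finset.univ) => h1 x)]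
      simp
    -- T1 + T2 = l * t
    have hT1T2 : ∑ i : Fin l, ∑ j : Fin n, Bs (Sum.inl i) (Sum.inr (Sum.inl j))
        + ∑ i : Fin l, ∑ x : Fin q, Bs (Sum.inl i) (Sum.inr (Sum.inr x)) = l * t := by
      rw [← Finset.sum_add_distrib]
      have h1 : ∀ i : Fin l, ∑ j : Fin n, Bs (Sum.inl i) (Sum.inr (Sum.inl j))
          + ∑ x : Fin q, Bs (Sum.inl i) (Sum.inr (Sum.inr x)) = t := by
        intro i
        have h := hrs (Sum.inl i)
        rw [Fintype.sum_sum_type, Fintype.sum_sum_type] at h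
        have h0 : ∑ c : Fin (t * m - p), Bs (Sum.inl i) (Sum.inl c) = 0 :=
          Finset.sum_eq_zero fun c _ => hz1 i c
        omega
      rw [Finset.sum_congr rfl (fun i (_ : i ∈ Finset.univ) => h1 i)]
      simp [Nat.mul_comm]
    -- T1 + S = n
    have hT1S : ∑ i : Fin l, ∑ j : Fin n, Bs (Sum.inl i) (Sum.inr (Sum.inl j))
        + ∑ i : Fin m, ∑ j : Fin n, B i j = n := by
      rw [Finset.sum_comm, Finset.sum_comm (γ := Fin m), ← Finset.sum_add_distrib]
      have h1 : ∀ j : Fin n, ∑ i : Fin l, Bs (Sum.inl i) (Sum.inr (Sum.inl j))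
          + ∑ i : Fin m, B i j = 1 := by
        intro j
        have h := hcs (Sum.inr (Sum.inl j))
        rw [Fintype.sum_sum_type] at h
        exact h
      rw [Finset.sum_congr rfl (fun j (_ : j ∈ Finset.univ) => h1 j)]
      simp
    have hltl : l * t = t * l := Nat.mul_comm l t
    have hS : ∑ i : Fin m, ∑ j : Fin n, B i j = p := by omega
    have := le_tTermRank t A B hBA hBr hBc
    omega
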